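/- Let X ∈ St(n,r), let f : ℝ^{n×r} → ℝ be differentiable with L-Lipschitz gradient and ‖∇f(X)‖ ≤ ϱ, let h : ℝ^{n×r} → ℝ be convex and L_h-Lipschitz, set F := f + h and c₂ := ϱM₂ + (1/2)LM₁² + L_hM₂ for constants M₁, M₂ > 0. Let B : ℝ^{n×r} → ℝ^{n×r} be self-adjoint for the trace inner product, map T_X into itself, and satisfy ⟨V,BV⟩ ≥ κ₁‖V‖² for all V ∈ T_X with κ₁ > 0, let V* ∈ T_X, and define φ(V) := ⟨∇f(X),V⟩ + (1/2)⟨V,BV⟩ + h(X+V). If 0 < α ≤ 1 and Y ∈ ℝ^{n×r} satisfies ‖Y − X‖ ≤ M₁‖αV*‖ and ‖Y − X − αV*‖ ≤ M₂‖αV*‖², then F(Y) ≤ (1−α)F(X) + α(f(X) + φ(V*)) + (c₂ − κ₁/(2α))‖αV*‖². -/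

import Mathlib

open Matrix

/-- The trace inner product `⟨A, B⟩ = tr(AᵀB)` on `ℝ^{n×r}`. -/
noncomputable def tinner {n r : ℕ} (A B : Matrix (Fin n) (Fin r) ℝ) : ℝ := (Aᵀ * B).trace

/-- `V` belongs to the tangent space `T_X = {V : VᵀX + XᵀV = 0}` of the Stiefel manifold at `X`. -/
def IsTangent {n r : ℕ} (X V : Matrix (Fin n) (Fin r) ℝ) : Prop := Vᵀ * X + Xᵀ * V = 0

-- The norm `‖·‖` below is the Frobenius norm, associated to the trace inner product.
attribute [local instance] Matrix.frobeniusNormedAddCommGroup Matrix.frobeniusNormedSpace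

section AuxTinner
variable {n r : ℕ}

lemma tinner_eq_sum (A B : Matrix (Fin n) (Fin r) ℝ) :
    tinner A B = ∑ i, ∑ j, A i j * B i j := by
  simp only [tinner, Matrix.trace, Matrix.diag, Matrix.mul_apply, Matrix.transpose_apply]
  rw [Finset.sum_comm]

lemma fro_norm_sq (A : Matrix (Fin n) (Fin r) ℝ) :
    ‖A‖ ^ 2 = ∑ i, ∑ j, (A i j) ^ 2 := by
  rw [Matrix.frobenius_norm_def]
  rw [← Real.rpow_natCast ((∑ i, ∑ j, ‖A i j‖ ^ (2:ℝ)) ^ ((1:ℝ)/2)) 2,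
    ← Real.rpow_mul (by positivity)]
  norm_num

lemma tinner_self (A : Matrix (Fin n) (Fin r) ℝ) : tinner A A = ‖A‖ ^ 2 := by
  rw [tinner_eq_sum, fro_norm_sq]; simp [sq]

lemma tinner_le (A B : Matrix (Fin n) (Fin r) ℝ) : tinner A B ≤ ‖A‖ * ‖B‖ := by
  have h1 : (tinner A B) ^ 2 ≤ (‖A‖ * ‖B‖) ^ 2 := by
    rw [tinner_eq_sum, mul_pow, fro_norm_sq, fro_norm_sq]
    have := Finset.sum_mul_sq_le_sq_mul_sq Finset.univ
      (fun p : Fin n × Fin r => A p.1 p.2) (fun p : Fin n × Fin r => B p.1 p.2)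
    simpa [Fintype.sum_prod_type] using this
  nlinarith [h1, abs_nonneg (tinner A B), le_abs_self (tinner A B), sq_abs (tinner A B), mul_nonneg (norm_nonneg A) (norm_nonneg B)]

lemma tinner_add_right (A B C : Matrix (Fin n) (Fin r) ℝ) :
    tinner A (B + C) = tinner A B + tinner A C := by
  simp [tinner, Matrix.mul_add]

lemma tinner_smul_right (A : Matrix (Fin n) (Fin r) ℝ) (c : ℝ) (B : Matrix (Fin n) (Fin r) ℝ) :
    tinner A (c • B) = c * tinner A B := by
  simp [tinner, Matrix.mul_smul]

lemma tinner_sub_left (A B C : Matrix (Fin n) (Fin r) ℝ) :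
    tinner (A - B) C = tinner A C - tinner B C := by
  simp [tinner, Matrix.transpose_sub, Matrix.sub_mul]

lemma tinner_zero_right (A : Matrix (Fin n) (Fin r) ℝ) : tinner A (0 : Matrix (Fin n) (Fin r) ℝ) = 0 := by
  simp [tinner]

lemma descent (f : Matrix (Fin n) (Fin r) ℝ → ℝ)
    (g : Matrix (Fin n) (Fin r) ℝ → Matrix (Fin n) (Fin r) ℝ)
    (Lf : Matrix (Fin n) (Fin r) ℝ → (Matrix (Fin n) (Fin r) ℝ →L[ℝ] ℝ))
    (hf : ∀ Z, HasFDerivAt f (Lf Z) Z) (hGrad : ∀ Z V, Lf Z V = tinner (g Z) V)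
    (L : ℝ) (hLipg : ∀ A B, ‖g A - g B‖ ≤ L * ‖A - B‖) (X Y : Matrix (Fin n) (Fin r) ℝ) :
    f Y ≤ f X + tinner (g X) (Y - X) + L / 2 * ‖Y - X‖ ^ 2 := by
  set D := Y - X with hD
  set ψ : ℝ → ℝ := fun t => f (X + t • D) - t * (Lf X D) - (L * ‖D‖^2 / 2) * t^2 with hψdef
  have hψ : ∀ t : ℝ, HasDerivAt ψ ((Lf (X + t • D)) D - (Lf X D) - (L*‖D‖^2/2)*(2*t)) t := by
    intro t
    have hline : HasDerivAt (fun s : ℝ => X + s • D) D t := by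
      exact (((hasDerivAt_id t).smul_const D).const_add X).congr_deriv (one_smul ℝ D)
    have h1 : HasDerivAt (fun s : ℝ => f (X + s • D)) ((Lf (X + t • D)) D) t :=
      (hf (X + t • D)).comp_hasDerivAt t hline
    have h2 : HasDerivAt (fun s : ℝ => s * (Lf X D)) (Lf X D) t := by
      simpa using (hasDerivAt_id t).mul_const ((Lf X) D)
    have h3 : HasDerivAt (fun s : ℝ => (L * ‖D‖^2 / 2) * s^2) ((L*‖D‖^2/2)*(2*t)) t := by
      simpa using (hasDerivAt_pow 2 t).const_mul (L * ‖D‖^2 / 2)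
    exact (h1.sub h2).sub h3
  have hderiv : ∀ t : ℝ, deriv ψ t = (Lf (X + t • D)) D - (Lf X D) - (L*‖D‖^2/2)*(2*t) :=
    fun t => (hψ t).deriv
  have hanti : AntitoneOn ψ (Set.Icc (0:ℝ) 1) := by
    apply antitoneOn_of_deriv_nonpos (convex_Icc 0 1)
    · exact fun t _ => ((hψ t).continuousAt).continuousWithinAt
    · exact fun t _ => ((hψ t).differentiableAt).differentiableWithinAt
    · intro t ht
      rw [interior_Icc] at ht
      rw [hderiv t]
      have key : (Lf (X + t • D)) D - (Lf X D) ≤ L * t * ‖D‖^2 := by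
        have e1 : (Lf (X + t • D)) D - (Lf X D) = tinner (g (X + t • D) - g X) D := by
          rw [hGrad, hGrad, tinner_sub_left]
        rw [e1]
        calc tinner (g (X + t • D) - g X) D ≤ ‖g (X + t • D) - g X‖ * ‖D‖ := tinner_le _ _
          _ ≤ (L * ‖(X + t • D) - X‖) * ‖D‖ := by
              apply mul_le_mul_of_nonneg_right _ (norm_nonneg _)
              exact hLipg _ _
          _ = L * t * ‖D‖^2 := by
              rw [add_sub_cancel_left, norm_smul, Real.norm_eq_abs, abs_of_pos ht.1]
              ring
      linarith
  have := hanti (Set.left_mem_Icc.2 zero_le_one) (Set.right_mem_Icc.2 zero_le_one) zero_le_one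
  simp only [hψdef, zero_smul, add_zero, one_smul, zero_mul] at this
  have eYX : X + D = Y := by rw [hD]; abel
  rw [eYX, hGrad] at this
  nlinarith [this]

end AuxTinner

theorem stmt5 {n r : ℕ} (X : Matrix (Fin n) (Fin r) ℝ) (hX : Xᵀ * X = 1)
    (f h : Matrix (Fin n) (Fin r) ℝ → ℝ)
    -- `f` is differentiable with gradient function `g = ∇f`, which is `L`-Lipschitz
    (g : Matrix (Fin n) (Fin r) ℝ → Matrix (Fin n) (Fin r) ℝ)
    (Lf : Matrix (Fin n) (Fin r) ℝ → (Matrix (Fin n) (Fin r) ℝ →L[ℝ] ℝ))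
    (hf : ∀ Z, HasFDerivAt f (Lf Z) Z) (hGrad : ∀ Z V, Lf Z V = tinner (g Z) V)
    (L Lh ϱ M₁ M₂ κ₁ : ℝ)
    (hLipg : ∀ A B, ‖g A - g B‖ ≤ L * ‖A - B‖)
    (hgX : ‖g X‖ ≤ ϱ)
    -- `h` is convex and `L_h`-Lipschitz
    (hconv : ConvexOn ℝ Set.univ h)
    (hLiph : ∀ A B, |h A - h B| ≤ Lh * ‖A - B‖)
    (hM₁ : 0 < M₁) (hM₂ : 0 < M₂) (hκ₁ : 0 < κ₁)
    -- `B` is linear, self-adjoint for the trace inner product, maps `T_X` into itself,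
    -- and satisfies `⟨V,BV⟩ ≥ κ₁‖V‖²` on `T_X`
    (B : Matrix (Fin n) (Fin r) ℝ →ₗ[ℝ] Matrix (Fin n) (Fin r) ℝ)
    (hBsa : ∀ U V, tinner U (B V) = tinner (B U) V)
    (hBtan : ∀ V, IsTangent X V → IsTangent X (B V))
    (hBlow : ∀ V, IsTangent X V → κ₁ * ‖V‖ ^ 2 ≤ tinner V (B V))
    -- `V* ∈ T_X` and the objective `φ(V) = ⟨∇f(X),V⟩ + (1/2)⟨V,BV⟩ + h(X+V)`
    (Vs : Matrix (Fin n) (Fin r) ℝ) (hVs : IsTangent X Vs)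
    (φ : Matrix (Fin n) (Fin r) ℝ → ℝ)
    (hφ : ∀ V, φ V = tinner (g X) V + (1 / 2) * tinner V (B V) + h (X + V))
    (α : ℝ) (hα0 : 0 < α) (hα1 : α ≤ 1)
    (Y : Matrix (Fin n) (Fin r) ℝ)
    (hY1 : ‖Y - X‖ ≤ M₁ * ‖α • Vs‖) (hY2 : ‖Y - X - α • Vs‖ ≤ M₂ * ‖α • Vs‖ ^ 2) :
    f Y + h Y ≤
      (1 - α) * (f X + h X) + α * (f X + φ Vs) +
        (ϱ * M₂ + (1 / 2) * L * M₁ ^ 2 + Lh * M₂ - κ₁ / (2 * α)) * ‖α • Vs‖ ^ 2 := by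
  by_cases hVs0 : Vs = 0
  · have hYX : Y = X := by
      have h0 : ‖Y - X‖ ≤ 0 := by simpa [hVs0] using hY1
      have := le_antisymm h0 (norm_nonneg _)
      rwa [norm_eq_zero, sub_eq_zero] at this
    subst hYX
    rw [hφ]
    simp only [hVs0, smul_zero, norm_zero, add_zero, map_zero, tinner_zero_right]
    ring_nf
    simp [mul_comm]
  · have hs : 0 < ‖Vs‖ := norm_pos_iff.mpr hVs0
    have hL0 : 0 ≤ L := by
      have h1 := hLipg (X + Vs) X
      rw [add_sub_cancel_left] at h1
      nlinarith [norm_nonneg (g (X + Vs) - g X)]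
    have hLh0 : 0 ≤ Lh := by
      have h1 := hLiph (X + Vs) X
      rw [add_sub_cancel_left] at h1
      nlinarith [abs_nonneg (h (X + Vs) - h X)]
    have hϱ0 : 0 ≤ ϱ := le_trans (norm_nonneg _) hgX
    have ha : ‖α • Vs‖ = α * ‖Vs‖ := by
      rw [norm_smul, Real.norm_eq_abs, abs_of_pos hα0]
    have hK : ‖α • Vs‖ ^ 2 = α ^ 2 * ‖Vs‖ ^ 2 := by rw [ha, mul_pow]
    have h1 : f Y ≤ f X + tinner (g X) (Y - X) + L / 2 * ‖Y - X‖ ^ 2 :=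
      descent f g Lf hf hGrad L hLipg X Y
    have h2 : tinner (g X) (Y - X) =
        α * tinner (g X) Vs + tinner (g X) (Y - X - α • Vs) := by
      have e : Y - X = α • Vs + (Y - X - α • Vs) := by abel
      rw [e]
      rw [tinner_add_right, tinner_smul_right]
      abel
    have h3 : tinner (g X) (Y - X - α • Vs) ≤ ϱ * (M₂ * ‖α • Vs‖ ^ 2) := by
      calc tinner (g X) (Y - X - α • Vs) ≤ ‖g X‖ * ‖Y - X - α • Vs‖ := tinner_le _ _
        _ ≤ ϱ * (M₂ * ‖α • Vs‖ ^ 2) := by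
            apply mul_le_mul hgX hY2 (norm_nonneg _) hϱ0
    have h4 : L / 2 * ‖Y - X‖ ^ 2 ≤ L / 2 * (M₁ ^ 2 * ‖α • Vs‖ ^ 2) := by
      apply mul_le_mul_of_nonneg_left _ (by linarith : (0:ℝ) ≤ L / 2)
      have := pow_le_pow_left₀ (norm_nonneg (Y - X)) hY1 2
      calc ‖Y - X‖ ^ 2 ≤ (M₁ * ‖α • Vs‖) ^ 2 := this
        _ = M₁ ^ 2 * ‖α • Vs‖ ^ 2 := by ring
    have h5 : h Y ≤ h (X + α • Vs) + Lh * (M₂ * ‖α • Vs‖ ^ 2) := by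
      have h51 := hLiph Y (X + α • Vs)
      have e : Y - (X + α • Vs) = Y - X - α • Vs := by abel
      rw [e] at h51
      have h52 : Lh * ‖Y - X - α • Vs‖ ≤ Lh * (M₂ * ‖α • Vs‖ ^ 2) :=
        mul_le_mul_of_nonneg_left hY2 hLh0
      have := le_abs_self (h Y - h (X + α • Vs))
      linarith
    have h6 : h (X + α • Vs) ≤ (1 - α) * h X + α * h (X + Vs) := by
      have hc := hconv.2 (Set.mem_univ X) (Set.mem_univ (X + Vs))
        (by linarith : (0:ℝ) ≤ 1 - α) hα0.le (by ring)
      have e : (1 - α) • X + α • (X + Vs) = X + α • Vs := by module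
      rw [e] at hc
      simpa [smul_eq_mul] using hc
    have h7 : κ₁ * ‖Vs‖ ^ 2 ≤ tinner Vs (B Vs) := hBlow Vs hVs
    have h7' : α / 2 * (κ₁ * ‖Vs‖ ^ 2) ≤ α / 2 * tinner Vs (B Vs) :=
      mul_le_mul_of_nonneg_left h7 (by linarith)
    have hdiv : κ₁ / (2 * α) * ‖α • Vs‖ ^ 2 = α / 2 * (κ₁ * ‖Vs‖ ^ 2) := by
      rw [hK]; field_simp
    rw [hφ]
    nlinarith [h1, h2, h3, h4, h5, h6, h7', hdiv]
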